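/- For every n ≥ 0, ∑_{i+j+k=n} binom(2i,i) · binom(2j,j) · binom(2k,k) = (2n+1) · binom(2n, n), where the sum is over all triples of nonnegative integers (i,j,k) with i + j + k = n. -/
import Mathlib

open Finset

private lemma centralBinom_conv (m : ℕ) :
    ∑ i ∈ range (m + 1), Nat.centralBinom i * Nat.centralBinom (m - i) = 4 ^ m := by
  induction m with
  | zero => simp [Nat.centralBinom]
  | succ m ih =>
    set c := Nat.centralBinom with hc
    set S : ℕ → ℕ := fun m => ∑ i ∈ range (m + 1), c i * c (m - i) with hS
    have hsym : ∀ k, 2 * (∑ i ∈ range (k + 1), 2 * i * (c i * c (k - i))) = 2 * k * S k := by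
      intro k
      have h1 : ∑ i ∈ range (k + 1), 2 * i * (c i * c (k - i))
          = ∑ i ∈ range (k + 1), 2 * (k - i) * (c (k - i) * c i) := by
        rw [← Finset.sum_range_reflect (fun i => 2 * (k - i) * (c (k - i) * c i)) (k+1)]
        apply Finset.sum_congr rfl
        intro i hi
        have hik : i ≤ k := by simpa [Nat.lt_succ_iff] using hi
        have e1 : k + 1 - 1 - i = k - i := by omega
        have e2 : k - (k - i) = i := Nat.sub_sub_self hik
        rw [e1, e2]
      have h2 : ∀ i ∈ range (k + 1),
          2 * i * (c i * c (k - i)) + 2 * (k - i) * (c (k - i) * c i)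
            = 2 * k * (c i * c (k - i)) := by
        intro i hi
        have hik : i ≤ k := by simpa [Nat.lt_succ_iff] using hi
        have e : 2 * i + 2 * (k - i) = 2 * k := by omega
        rw [mul_comm (c (k - i)) (c i), ← add_mul, e]
      calc 2 * (∑ i ∈ range (k + 1), 2 * i * (c i * c (k - i)))
          = (∑ i ∈ range (k + 1), 2 * i * (c i * c (k - i)))
            + ∑ i ∈ range (k + 1), 2 * (k - i) * (c (k - i) * c i) := by
            rw [← h1]; ring
        _ = ∑ i ∈ range (k + 1), 2 * k * (c i * c (k - i)) := by
            rw [← Finset.sum_add_distrib]; exact Finset.sum_congr rfl h2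
        _ = 2 * k * S k := by rw [hS, Finset.mul_sum]
    -- shift identity: A (m+1) = 4 * A m + 4 * S m
    have hshift : ∑ i ∈ range (m + 2), 2 * i * (c i * c (m + 1 - i))
        = 4 * (∑ i ∈ range (m + 1), 2 * i * (c i * c (m - i))) + 4 * S m := by
      rw [Finset.sum_range_succ' (fun i => 2 * i * (c i * c (m + 1 - i))) (m + 1)]
      simp only [Nat.zero_eq, mul_zero, zero_mul, add_zero]
      have key1 : ∀ j, 2 * (j + 1) * (c (j + 1) * c (m + 1 - (j + 1)))
          = (8 * j + 4) * (c j * c (m - j)) := by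
        intro j
        have hsucc : (j + 1) * c (j + 1) = 2 * (2 * j + 1) * c j :=
          Nat.succ_mul_centralBinom_succ j
        have hm : m + 1 - (j + 1) = m - j := by omega
        rw [hm]
        calc 2 * (j + 1) * (c (j + 1) * c (m - j))
            = 2 * ((j + 1) * c (j + 1)) * c (m - j) := by ring
          _ = 2 * (2 * (2 * j + 1) * c j) * c (m - j) := by rw [hsucc]
          _ = (8 * j + 4) * (c j * c (m - j)) := by ring
      rw [Finset.sum_congr rfl (fun j _ => key1 j)]
      have key2 : ∀ j, (8 * j + 4) * (c j * c (m - j))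
          = 4 * (2 * j * (c j * c (m - j))) + 4 * (c j * c (m - j)) := by
        intro j; ring
      rw [Finset.sum_congr rfl (fun j _ => key2 j), Finset.sum_add_distrib,
        ← Finset.mul_sum, ← Finset.mul_sum]
    have key : 2 * (m + 1) * S (m + 1) = 2 * (m + 1) * (4 * S m) := by
      have h1 := hsym (m + 1)
      have h2 := hsym m
      rw [hshift] at h1
      calc 2 * (m + 1) * S (m + 1)
          = 2 * (4 * (∑ i ∈ range (m + 1), 2 * i * (c i * c (m - i))) + 4 * S m) := h1.symm
        _ = 4 * (2 * (∑ i ∈ range (m + 1), 2 * i * (c i * c (m - i)))) + 8 * S m := by ring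
        _ = 4 * (2 * m * S m) + 8 * S m := by rw [h2]
        _ = 2 * (m + 1) * (4 * S m) := by ring
    have hpos : 0 < 2 * (m + 1) := by omega
    have hfin : S (m + 1) = 4 * S m := Nat.eq_of_mul_eq_mul_left hpos key
    rw [hS] at hfin
    simp only at hfin
    rw [hfin, ih]
    ring

private lemma centralBinom_weighted (n : ℕ) :
    ∑ i ∈ range (n + 1), Nat.centralBinom i * 4 ^ (n - i)
      = (2 * n + 1) * Nat.centralBinom n := by
  induction n with
  | zero => simp [Nat.centralBinom]
  | succ n ih =>
    rw [Finset.sum_range_succ]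
    have hstep : ∀ i ∈ range (n + 1),
        Nat.centralBinom i * 4 ^ (n + 1 - i) = 4 * (Nat.centralBinom i * 4 ^ (n - i)) := by
      intro i hi
      have hik : i ≤ n := by simpa [Nat.lt_succ_iff] using hi
      have e : n + 1 - i = (n - i) + 1 := by omega
      rw [e, pow_succ]; ring
    rw [Finset.sum_congr rfl hstep, ← Finset.mul_sum, ih]
    have hsucc : (n + 1) * Nat.centralBinom (n + 1) = 2 * (2 * n + 1) * Nat.centralBinom n :=
      Nat.succ_mul_centralBinom_succ n
    simp only [Nat.sub_self, pow_zero, mul_one]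
    nlinarith [hsucc]

/-- The triple convolution of central binomial coefficients:
`∑_{i+j+k=n} binom(2i,i)·binom(2j,j)·binom(2k,k) = (2n+1)·binom(2n,n)`. -/
theorem stmt_4 (n : ℕ) :
    ∑ i ∈ Finset.range (n + 1), ∑ j ∈ Finset.range (n + 1 - i),
        Nat.centralBinom i * Nat.centralBinom j * Nat.centralBinom (n - i - j) =
      (2 * n + 1) * Nat.centralBinom n := by
  have hinner : ∀ i ∈ range (n + 1),
      ∑ j ∈ range (n + 1 - i),
          Nat.centralBinom i * Nat.centralBinom j * Nat.centralBinom (n - i - j)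
        = Nat.centralBinom i * 4 ^ (n - i) := by
    intro i hi
    have hik : i ≤ n := by simpa [Nat.lt_succ_iff] using hi
    have h1 : n + 1 - i = (n - i) + 1 := by omega
    rw [h1, ← centralBinom_conv (n - i), Finset.mul_sum]
    apply Finset.sum_congr rfl
    intro j _
    rw [Nat.sub_sub, mul_assoc]
  rw [Finset.sum_congr rfl hinner]
  exact centralBinom_weighted n
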